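/- Let q^{1/4} be a primitive 4N-th root of unity, γ(x) = q^{x²/4} for x ∈ Z/2NZ, and τ = Σ_{j=0}^{2N-1} q^{j²/4}. Then F₊(γ) = τ γ^{-1}, where F₊(f)(λ) = Σ_{x=0}^{2N-1} q^{xλ/2} f(x). Consequently τ · conj(τ) = 2N when q^{1/4} = e^{πi/2N}. -/

import Mathlib

/-- The Fourier transform `F₊` on functions on `ℤ/2Nℤ`, with respect to
`ζ = q^{1/2}`: `F₊(f)(λ) = Σ_{x=0}^{2N-1} ζ^{xλ} f(x)`. -/
noncomputable def Fplus (N : ℕ) (ζ : ℂ) (f : ZMod (2*N) → ℂ) (l : ZMod (2*N)) : ℂ :=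
  ∑ x ∈ Finset.range (2*N), ζ ^ (x * l.val) * f x

/-- Let `ξ = q^{1/4}` be a primitive `4N`-th root of unity, `γ(x) = ξ^{x²}` (that is,
`q^{x²/4}`) on `ℤ/2Nℤ`, and `τ = Σ_{j=0}^{2N-1} ξ^{j²}`. Then `F₊(γ) = τ·γ⁻¹`
(with `q^{1/2} = ξ²`), and consequently `τ·conj(τ) = 2N` when `ξ = e^{πi/2N}`. -/
theorem gauss_sum_eigenvector (N : ℕ) (hN : 1 ≤ N) (ξ : ℂ)
    (hξ : IsPrimitiveRoot ξ (4*N)) :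
    (∀ l : ZMod (2*N),
      Fplus N (ξ^2) (fun x => ξ ^ (x.val^2)) l
        = (∑ j ∈ Finset.range (2*N), ξ ^ (j^2)) * (ξ ^ (l.val^2))⁻¹) ∧
    (ξ = Complex.exp (Real.pi * Complex.I / (2*N)) →
      (∑ j ∈ Finset.range (2*N), ξ ^ (j^2)) *
        (starRingEnd ℂ) (∑ j ∈ Finset.range (2*N), ξ ^ (j^2)) = 2*N) := by
  haveI : NeZero (2*N) := ⟨by omega⟩
  have h4 : (4*N) ≠ 0 := by omega
  have hξ0 : ξ ≠ 0 := hξ.ne_zero h4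
  -- zpow congruence mod 4N
  have hz : ∀ a b : ℤ, a ≡ b [ZMOD (4*N)] → ξ ^ a = ξ ^ b := by
    intro a b hab
    have h1 : ξ ^ (a - b) = 1 := (hξ.zpow_eq_one_iff_dvd _).mpr hab.symm.dvd
    calc ξ ^ a = ξ ^ (b + (a - b)) := by ring_nf
      _ = ξ ^ b * ξ ^ (a - b) := zpow_add₀ hξ0 _ _
      _ = ξ ^ b := by rw [h1, mul_one]
  -- squares congruence
  have hsq : ∀ a b : ℕ, (a : ZMod (2*N)) = (b : ZMod (2*N)) → ξ ^ (a^2) = ξ ^ (b^2) := by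
    intro a b hab
    rw [ZMod.natCast_eq_natCast_iff] at hab
    have h1 : (a : ℤ) ≡ (b : ℤ) [ZMOD (2*N)] := by exact_mod_cast Int.natCast_modEq_iff.mpr hab
    obtain ⟨t, ht⟩ := h1.dvd
    have h2 : (a : ℤ)^2 ≡ (b : ℤ)^2 [ZMOD (4*N)] := by
      have hb : (b : ℤ) = a + 2*N*t := by push_cast at ht ⊢; linarith
      have : (b : ℤ)^2 - (a : ℤ)^2 = (4*N) * (t*(N*t) + t*a) := by rw [hb]; push_cast; ring
      exact (Int.modEq_iff_dvd.mpr ⟨_, this⟩)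
    have := hz ((a:ℤ)^2) ((b:ℤ)^2) h2
    rw [show ((a:ℤ)^2) = ((a^2 : ℕ) : ℤ) by push_cast; ring,
        show ((b:ℤ)^2) = ((b^2 : ℕ) : ℤ) by push_cast; ring,
        zpow_natCast, zpow_natCast] at this
    exact this
  set G : ZMod (2*N) → ℂ := fun y => ξ ^ (y.val^2) with hGdef
  have hG : ∀ m : ℕ, ξ ^ (m^2) = G (m : ZMod (2*N)) := by
    intro m
    exact hsq m ((m : ZMod (2*N)).val) (by simp [ZMod.natCast_val, ZMod.cast_id])
  have hB : ∀ F : ZMod (2*N) → ℂ,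
      ∑ x ∈ Finset.range (2*N), F (x : ZMod (2*N)) = ∑ y : ZMod (2*N), F y := by
    intro F
    exact Finset.sum_nbij' (fun x => (x : ZMod (2*N))) (fun y => y.val)
      (fun a _ => Finset.mem_univ _)
      (fun a _ => Finset.mem_range.mpr (ZMod.val_lt a))
      (fun a ha => ZMod.val_cast_of_lt (Finset.mem_range.mp ha))
      (fun a _ => by simp [ZMod.natCast_val, ZMod.cast_id])
      (fun a _ => rfl)
  set τ : ℂ := ∑ j ∈ Finset.range (2*N), ξ ^ (j^2) with hτdef
  have part1 : ∀ l : ZMod (2*N), Fplus N (ξ^2) G l = τ * (ξ ^ (l.val^2))⁻¹ := by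
    intro l
    have hne : ξ ^ (l.val^2) ≠ 0 := pow_ne_zero _ hξ0
    have key : ξ ^ (l.val^2) * Fplus N (ξ^2) G l = τ := by
      unfold Fplus
      rw [Finset.mul_sum]
      have step : ∀ x ∈ Finset.range (2*N),
          ξ ^ (l.val^2) * ((ξ^2) ^ (x * l.val) * G (x : ZMod (2*N)))
            = G ((x : ZMod (2*N)) + (l.val : ZMod (2*N))) := by
        intro x _
        rw [← hG x, ← pow_mul, ← mul_assoc, ← pow_add, ← pow_add]
        rw [show (x : ZMod (2*N)) + (l.val : ZMod (2*N)) = ((x + l.val : ℕ) : ZMod (2*N)) by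
          push_cast; ring]
        rw [← hG (x + l.val)]
        congr 1
        ring
      rw [Finset.sum_congr rfl step]
      rw [hB (fun y => G (y + (l.val : ZMod (2*N))))]
      have hs : ∑ y : ZMod (2*N), G (y + (l.val : ZMod (2*N))) = ∑ y : ZMod (2*N), G y :=
        Fintype.sum_equiv (Equiv.addRight ((l.val : ZMod (2*N))))
          (fun y => G (y + (l.val : ZMod (2*N)))) G (fun y => rfl)
      rw [hs, ← hB G]
      exact Finset.sum_congr rfl (fun x _ => (hG x).symm)
    rw [← key, mul_comm (ξ ^ (l.val^2)) _, mul_assoc, mul_inv_cancel₀ hne, mul_one]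
  constructor
  · exact part1
  · intro _
    have hconj : (starRingEnd ℂ) ξ = ξ⁻¹ :=
      (Complex.inv_eq_conj (Complex.norm_eq_one_of_pow_eq_one hξ.pow_eq_one h4)).symm
    rw [map_sum]
    have hct : ∀ j ∈ Finset.range (2*N), (starRingEnd ℂ) (ξ ^ (j^2)) = (ξ ^ (j^2))⁻¹ := by
      intro j _; rw [map_pow, hconj, inv_pow]
    rw [Finset.sum_congr rfl hct, Finset.mul_sum]
    have step : ∀ k ∈ Finset.range (2*N),
        τ * (ξ ^ (k^2))⁻¹ = ∑ x ∈ Finset.range (2*N), (ξ^2) ^ (x * k) * ξ ^ (x^2) := by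
      intro k hk
      have := (part1 (k : ZMod (2*N))).symm
      rw [ZMod.val_cast_of_lt (Finset.mem_range.mp hk)] at this
      rw [this]
      unfold Fplus
      rw [ZMod.val_cast_of_lt (Finset.mem_range.mp hk)]
      exact Finset.sum_congr rfl (fun x _ => by rw [← hG x])
    rw [Finset.sum_congr rfl step, Finset.sum_comm]
    have inner : ∀ x ∈ Finset.range (2*N),
        ∑ k ∈ Finset.range (2*N), (ξ^2) ^ (x * k) * ξ ^ (x^2)
          = if x = 0 then (2*N : ℂ) else 0 := by
      intro x hx
      have hrw : ∀ k, (ξ^2) ^ (x * k) * ξ ^ (x^2) = ((ξ^2)^x) ^ k * ξ ^ (x^2) := by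
        intro k; rw [pow_mul]
      simp_rw [hrw]
      rw [← Finset.sum_mul]
      by_cases h0 : x = 0
      · subst h0; simp
      · rw [if_neg h0]
        have hr1 : (ξ^2)^x ≠ 1 := by
          rw [← pow_mul]
          intro hc
          have := (hξ.pow_eq_one_iff_dvd _).mp hc
          have hxlt := Finset.mem_range.mp hx
          have hle := Nat.le_of_dvd (by omega) this
          omega
        rw [geom_sum_eq hr1]
        have : ((ξ^2)^x) ^ (2*N) = 1 := by
          rw [← pow_mul, ← pow_mul]
          rw [show 2 * (x * (2*N)) = (4*N) * x by ring, pow_mul, hξ.pow_eq_one, one_pow]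
        rw [this, sub_self, zero_div, zero_mul]
    rw [Finset.sum_congr rfl inner, Finset.sum_ite_eq' (Finset.range (2*N)) 0 (fun _ => (2*N : ℂ))]
    rw [if_pos (Finset.mem_range.mpr (by omega))]
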